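/- Let λ ∈ ℝ, α > 0, 0 < β < α, δ > 0, and set γ = √(α² − β²). Let M ∈ ℝ satisfy (M/√(δ² + M²)) · K_{λ−3/2}(α√(δ² + M²)) / K_{λ−1/2}(α√(δ² + M²)) = β/α and set E = δβK_{λ+1}(δγ)/(γK_λ(δγ)). Then (β/γ²)·[1/2 + √(λ² + δ²γ²) − √((λ − 1/2)² + δ²γ²)] < E − M < (β/γ²)·[5/2 + √((λ + 1)² + δ²γ²) − √((λ − 3/2)² + δ²γ²)]. -/

import Mathlib

open Real MeasureTheory

open Set Filter Topology

-- pointwise bound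
lemma cosh_ge_quarter_sq {t : ℝ} (ht : 0 ≤ t) : t^2/8 ≤ Real.cosh t := by
  have h1 : (1 + t/2)^2 ≤ Real.exp t := by
    have := Real.add_one_le_exp (t/2)
    calc (1+t/2)^2 ≤ (Real.exp (t/2))^2 := by
          apply pow_le_pow_left₀ (by linarith) (by linarith) 2
      _ = Real.exp t := by rw [← Real.exp_nat_mul]; ring_nf
  have h2 : Real.exp t / 2 ≤ Real.cosh t := by
    rw [Real.cosh_eq]
    have := (Real.exp_pos (-t)).le
    linarith
  nlinarith [sq_nonneg t]

lemma key_bound (x a : ℝ) (hx : 0 < x) {t : ℝ} (ht : 0 ≤ t) :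
    a * t - x * Real.cosh t ≤ 2*(a+1)^2/x - t := by
  have h := cosh_ge_quarter_sq ht
  have h2 : x * (t^2/8) ≤ x * Real.cosh t := by nlinarith
  have : (a+1)*t*x ≤ x^2*t^2/8 + 2*(a+1)^2 := by nlinarith [sq_nonneg (x*t - 4*(a+1))]
  rw [div_sub' (ne_of_gt hx), le_div_iff₀ hx]
  nlinarith

lemma int_exp_aux (x a : ℝ) (hx : 0 < x) :
    IntegrableOn (fun t => Real.exp (a * t - x * Real.cosh t)) (Ioi (0:ℝ)) := by
  have hmeas : Measurable (fun t => Real.exp (a * t - x * Real.cosh t)) := by fun_prop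
  apply Integrable.mono' ((exp_neg_integrableOn_Ioi 0 one_pos).const_mul (Real.exp (2*(a+1)^2/x)))
  · exact hmeas.aestronglyMeasurable
  · filter_upwards [ae_restrict_mem measurableSet_Ioi] with t ht
    rw [Real.norm_eq_abs, Real.abs_exp, ← Real.exp_add]
    apply Real.exp_le_exp.2
    have := key_bound x a hx (le_of_lt ht)
    linarith

lemma integrableOn_of_bound {f : ℝ → ℝ} (x a : ℝ) (hx : 0 < x)
    (hmeas : Measurable f)
    (hb : ∀ t, 0 < t → |f t| ≤ Real.exp (a * t - x * Real.cosh t)) :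
    IntegrableOn f (Ioi (0:ℝ)) := by
  apply Integrable.mono' (int_exp_aux x a hx) hmeas.aestronglyMeasurable
  filter_upwards [ae_restrict_mem measurableSet_Ioi] with t ht
  simpa using hb t ht

lemma cosh_le_exp_abs' (u : ℝ) : Real.cosh u ≤ Real.exp |u| := by
  rw [Real.cosh_eq]
  have h1 := Real.exp_le_exp.2 (le_abs_self u)
  have h2 := Real.exp_le_exp.2 (neg_le_abs u)
  linarith

lemma besselK_integrable (ν x : ℝ) (hx : 0 < x) :
    IntegrableOn (fun t => Real.exp (-x * Real.cosh t) * Real.cosh (ν*t)) (Ioi (0:ℝ)) := by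
  apply integrableOn_of_bound x |ν| hx (by fun_prop)
  intro t ht
  rw [abs_mul, Real.abs_exp, abs_of_pos (Real.cosh_pos _)]
  have h1 : Real.cosh (ν*t) ≤ Real.exp (|ν| * t) := by
    calc Real.cosh (ν*t) ≤ Real.exp (|ν * t|) := cosh_le_exp_abs' _
      _ = Real.exp (|ν| * t) := by rw [abs_mul, abs_of_pos ht]
  calc Real.exp (-x * Real.cosh t) * Real.cosh (ν * t)
      ≤ Real.exp (-x * Real.cosh t) * Real.exp (|ν| * t) :=
        mul_le_mul_of_nonneg_left h1 (Real.exp_pos _).le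
    _ = Real.exp (|ν| * t - x * Real.cosh t) := by rw [← Real.exp_add]; ring_nf

/-- Modified Bessel function of the second kind. -/
noncomputable def besselK (ν x : ℝ) : ℝ :=
  ∫ t in Set.Ioi (0:ℝ), Real.exp (-x * Real.cosh t) * Real.cosh (ν * t)

lemma besselK_pos (ν x : ℝ) (hx : 0 < x) : 0 < besselK ν x := by
  rw [besselK, setIntegral_pos_iff_support_of_nonneg_ae]
  · have hs : Function.support (fun t => Real.exp (-x * Real.cosh t) * Real.cosh (ν * t)) = univ := by
      ext t; simp [Function.mem_support]
      exact fun h => (Real.cosh_pos (ν*t)).ne' h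
    rw [hs, univ_inter]
    simp [Real.volume_Ioi]
  · filter_upwards with t
    exact le_of_lt (mul_pos (Real.exp_pos _) (Real.cosh_pos _))
  · exact besselK_integrable ν x hx

lemma besselK_neg (ν x : ℝ) : besselK (-ν) x = besselK ν x := by
  unfold besselK
  congr 1; ext t
  rw [show -ν * t = -(ν*t) by ring, Real.cosh_neg]

lemma abs_sinh_le_exp_abs (u : ℝ) : |Real.sinh u| ≤ Real.exp |u| := by
  rw [Real.abs_sinh]
  calc Real.sinh |u| ≤ Real.cosh |u| := by
        rw [Real.sinh_eq, Real.cosh_eq]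
        have := (Real.exp_pos (-|u|)).le
        linarith [Real.exp_pos (-|u|)]
    _ ≤ Real.exp |u| := by
        rw [Real.cosh_eq]
        have h3 : Real.exp (-|u|) ≤ Real.exp |u| :=
          Real.exp_le_exp.2 (by linarith [abs_nonneg u])
        linarith

lemma sinh_term_integrable (ν x : ℝ) (hx : 0 < x) :
    IntegrableOn (fun t => Real.sinh t * Real.exp (-x * Real.cosh t) * Real.sinh (ν*t)) (Ioi (0:ℝ)) := by
  apply integrableOn_of_bound x (|ν|+1) hx (by fun_prop)
  intro t ht
  rw [abs_mul, abs_mul, Real.abs_exp]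
  have h1 : |Real.sinh t| ≤ Real.exp t := by
    calc |Real.sinh t| ≤ Real.exp |t| := abs_sinh_le_exp_abs t
      _ = Real.exp t := by rw [abs_of_pos ht]
  have h2 : |Real.sinh (ν*t)| ≤ Real.exp (|ν| * t) := by
    calc |Real.sinh (ν*t)| ≤ Real.exp (|ν*t|) := abs_sinh_le_exp_abs _
      _ = Real.exp (|ν| * t) := by rw [abs_mul, abs_of_pos ht]
  calc |Real.sinh t| * Real.exp (-x * Real.cosh t) * |Real.sinh (ν * t)|
      ≤ Real.exp t * Real.exp (-x * Real.cosh t) * Real.exp (|ν| * t) := by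
        apply mul_le_mul (mul_le_mul_of_nonneg_right h1 (Real.exp_pos _).le) h2
          (abs_nonneg _) (by positivity)
    _ = Real.exp ((|ν|+1) * t - x * Real.cosh t) := by
        rw [← Real.exp_add, ← Real.exp_add]; ring_nf

lemma besselK_recurrence (ν x : ℝ) (hx : 0 < x) :
    besselK (ν+1) x = besselK (ν-1) x + (2*ν/x) * besselK ν x := by
  set F : ℝ → ℝ := fun t => -(2/x) * (Real.exp (-x * Real.cosh t) * Real.sinh (ν*t)) with hF
  set F' : ℝ → ℝ := fun t =>
    2 * (Real.sinh t * Real.exp (-x * Real.cosh t) * Real.sinh (ν*t))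
      - (2*ν/x) * (Real.exp (-x * Real.cosh t) * Real.cosh (ν*t)) with hF'
  have hderiv : ∀ t : ℝ, HasDerivAt F (F' t) t := by
    intro t
    have h1 : HasDerivAt (fun t => -x * Real.cosh t) (-x * Real.sinh t) t :=
      (Real.hasDerivAt_cosh t).const_mul (-x)
    have h2 : HasDerivAt (fun t => Real.exp (-x * Real.cosh t))
        (Real.exp (-x * Real.cosh t) * (-x * Real.sinh t)) t := h1.exp
    have h3 : HasDerivAt (fun t : ℝ => ν * t) ν t := by
      simpa using (hasDerivAt_id t).const_mul ν
    have h4 : HasDerivAt (fun t => Real.sinh (ν*t)) (Real.cosh (ν*t) * ν) t :=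
      (Real.hasDerivAt_sinh (ν*t)).comp t h3
    have h5 := (h2.mul h4).const_mul (-(2/x))
    refine h5.congr_deriv ?_
    simp only [hF']; field_simp
    ring
  have hint : IntegrableOn F' (Ioi (0:ℝ)) := by
    apply Integrable.sub (((sinh_term_integrable ν x hx).const_mul 2))
      (((besselK_integrable ν x hx).const_mul (2*ν/x)))
  have htend : Tendsto F atTop (𝓝 0) := by
    apply squeeze_zero_norm' (a := fun t => (2/x) * Real.exp (2*(|ν|+1)^2/x) * Real.exp (-t))
    · filter_upwards [eventually_ge_atTop (0:ℝ)] with t ht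
      rw [hF]
      rw [Real.norm_eq_abs, abs_mul, abs_mul, Real.abs_exp, abs_neg, abs_div, abs_two,
        abs_of_pos hx]
      have h2 : |Real.sinh (ν*t)| ≤ Real.exp (|ν| * t) := by
        calc |Real.sinh (ν*t)| ≤ Real.exp (|ν*t|) := abs_sinh_le_exp_abs _
          _ = Real.exp (|ν| * t) := by rw [abs_mul, abs_of_nonneg ht]
      have key := key_bound x (|ν|) hx ht
      calc 2/x * (Real.exp (-x * Real.cosh t) * |Real.sinh (ν * t)|)
          ≤ 2/x * (Real.exp (-x * Real.cosh t) * Real.exp (|ν| * t)) := by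
            apply mul_le_mul_of_nonneg_left (mul_le_mul_of_nonneg_left h2 (Real.exp_pos _).le)
              (by positivity)
        _ = 2/x * Real.exp (|ν| * t - x * Real.cosh t) := by rw [← Real.exp_add]; ring_nf
        _ ≤ 2/x * (Real.exp (2*(|ν|+1)^2/x) * Real.exp (-t)) := by
            rw [← Real.exp_add]
            apply mul_le_mul_of_nonneg_left (Real.exp_le_exp.2 (by linarith)) (by positivity)
        _ = 2/x * Real.exp (2*(|ν|+1)^2/x) * Real.exp (-t) := by ring
    · rw [show (0:ℝ) = (2/x * Real.exp (2*(|ν|+1)^2/x)) * 0 by ring]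
      exact (Real.tendsto_exp_neg_atTop_nhds_zero.comp tendsto_id).const_mul _
  have hF0 : F 0 = 0 := by simp [hF]
  have h0 : ∫ t in Ioi (0:ℝ), F' t = 0 - F 0 :=
    integral_Ioi_of_hasDerivAt_of_tendsto (hderiv 0).continuousAt.continuousWithinAt
      (fun t _ => hderiv t) hint htend
  rw [hF0, sub_zero] at h0
  have hsplit : ∫ t in Ioi (0:ℝ), F' t =
      (∫ t in Ioi (0:ℝ), 2 * (Real.sinh t * Real.exp (-x * Real.cosh t) * Real.sinh (ν*t)))
      - (2*ν/x) * besselK ν x := by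
    rw [hF', besselK]
    rw [integral_sub (((sinh_term_integrable ν x hx).const_mul 2))
      (((besselK_integrable ν x hx).const_mul (2*ν/x)))]
    simp only [MeasureTheory.integral_const_mul]
  have hA : (∫ t in Ioi (0:ℝ), 2 * (Real.sinh t * Real.exp (-x * Real.cosh t) * Real.sinh (ν*t)))
      = besselK (ν+1) x - besselK (ν-1) x := by
    rw [besselK, besselK, ← integral_sub (besselK_integrable _ x hx) (besselK_integrable _ x hx)]
    congr 1; ext t
    have e1 : (ν+1) * t = ν*t + t := by ring
    have e2 : (ν-1) * t = ν*t - t := by ring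
    rw [e1, e2, Real.cosh_add, Real.cosh_sub]
    ring
  rw [hsplit, hA] at h0
  linarith

lemma cosh_mul_cosh_eq (ν t : ℝ) :
    Real.cosh ((ν-1)*t) * Real.cosh ((ν+1)*t) = Real.cosh (ν*t)^2 + Real.sinh t^2 := by
  rw [show (ν-1)*t = ν*t - t by ring, show (ν+1)*t = ν*t + t by ring,
    Real.cosh_sub, Real.cosh_add]
  linear_combination Real.cosh (ν*t)^2 * Real.cosh_sq t + Real.sinh t^2 * Real.cosh_sq (ν*t)

lemma cross_integrable (ν x : ℝ) (hx : 0 < x) :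
    IntegrableOn (fun t => Real.exp (-x * Real.cosh t) *
      Real.sqrt (Real.cosh ((ν-1)*t) * Real.cosh ((ν+1)*t))) (Ioi (0:ℝ)) := by
  apply integrableOn_of_bound x (|ν|+1) hx (by fun_prop)
  intro t ht
  rw [abs_mul, Real.abs_exp, abs_of_nonneg (Real.sqrt_nonneg _)]
  have hb : Real.sqrt (Real.cosh ((ν-1)*t) * Real.cosh ((ν+1)*t)) ≤ Real.exp ((|ν|+1)*t) := by
    rw [show Real.exp ((|ν|+1)*t) = Real.sqrt ((Real.exp ((|ν|+1)*t))^2) by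
      rw [Real.sqrt_sq (Real.exp_pos _).le]]
    apply Real.sqrt_le_sqrt
    have h1 : Real.cosh ((ν-1)*t) ≤ Real.exp ((|ν|+1)*t) := by
      calc Real.cosh ((ν-1)*t) ≤ Real.exp (|(ν-1)*t|) := cosh_le_exp_abs' _
        _ ≤ Real.exp ((|ν|+1)*t) := by
            apply Real.exp_le_exp.2
            rw [abs_mul, abs_of_pos ht]
            have : |ν-1| ≤ |ν|+1 := by
              calc |ν-1| ≤ |ν| + |(1:ℝ)| := abs_sub _ _
                _ = |ν|+1 := by norm_num
            nlinarith
    have h2 : Real.cosh ((ν+1)*t) ≤ Real.exp ((|ν|+1)*t) := by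
      calc Real.cosh ((ν+1)*t) ≤ Real.exp (|(ν+1)*t|) := cosh_le_exp_abs' _
        _ ≤ Real.exp ((|ν|+1)*t) := by
            apply Real.exp_le_exp.2
            rw [abs_mul, abs_of_pos ht]
            have : |ν+1| ≤ |ν|+1 := by
              calc |ν+1| ≤ |ν| + |(1:ℝ)| := abs_add_le _ _
                _ = |ν|+1 := by norm_num
            nlinarith
    calc Real.cosh ((ν-1)*t) * Real.cosh ((ν+1)*t)
        ≤ Real.exp ((|ν|+1)*t) * Real.exp ((|ν|+1)*t) :=
          mul_le_mul h1 h2 (Real.cosh_pos _).le (Real.exp_pos _).le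
      _ = (Real.exp ((|ν|+1)*t))^2 := by ring
  calc Real.exp (-x * Real.cosh t) * Real.sqrt (Real.cosh ((ν-1)*t) * Real.cosh ((ν+1)*t))
      ≤ Real.exp (-x * Real.cosh t) * Real.exp ((|ν|+1)*t) :=
        mul_le_mul_of_nonneg_left hb (Real.exp_pos _).le
    _ = Real.exp ((|ν|+1)*t - x * Real.cosh t) := by rw [← Real.exp_add]; ring_nf

lemma besselK_turan (ν x : ℝ) (hx : 0 < x) :
    besselK ν x ^ 2 < besselK (ν-1) x * besselK (ν+1) x := by
  set b : ℝ → ℝ := fun t => Real.exp (-x * Real.cosh t) *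
      Real.sqrt (Real.cosh ((ν-1)*t) * Real.cosh ((ν+1)*t)) with hb
  set B : ℝ := ∫ t in Ioi (0:ℝ), b t with hB
  have hbint : IntegrableOn b (Ioi (0:ℝ)) := cross_integrable ν x hx
  have hKm := besselK_integrable (ν-1) x hx
  have hKp := besselK_integrable (ν+1) x hx
  have hKn := besselK_integrable ν x hx
  have hA : 0 < besselK (ν-1) x := besselK_pos _ x hx
  have hC : 0 < besselK (ν+1) x := besselK_pos _ x hx
  have hK : 0 < besselK ν x := besselK_pos _ x hx
  -- step 1 : besselK ν x < B
  have step1 : besselK ν x < B := by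
    have hdiff : 0 < ∫ t in Ioi (0:ℝ),
        (b t - Real.exp (-x * Real.cosh t) * Real.cosh (ν*t)) := by
      rw [setIntegral_pos_iff_support_of_nonneg_ae]
      · have hs : (Ioi (0:ℝ)) ⊆ Function.support
            (fun t => b t - Real.exp (-x * Real.cosh t) * Real.cosh (ν*t)) := by
          intro t ht
          have hlt : Real.cosh (ν*t) < Real.sqrt (Real.cosh ((ν-1)*t) * Real.cosh ((ν+1)*t)) := by
            rw [show Real.cosh (ν*t) = Real.sqrt (Real.cosh (ν*t)^2) by
              rw [Real.sqrt_sq (Real.cosh_pos _).le]]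
            apply Real.sqrt_lt_sqrt (sq_nonneg _)
            rw [cosh_mul_cosh_eq]
            have : 0 < Real.sinh t := by
              rw [← Real.sinh_zero]
              exact Real.sinh_lt_sinh.2 ht
            nlinarith
          have hpos : 0 < b t - Real.exp (-x * Real.cosh t) * Real.cosh (ν*t) := by
            simp only [hb]
            have h4 := mul_lt_mul_of_pos_left hlt (Real.exp_pos (-x * Real.cosh t))
            linarith
          simpa using hpos.ne'
        have : volume (Ioi (0:ℝ)) ≤ volume (Function.support
            (fun t => b t - Real.exp (-x * Real.cosh t) * Real.cosh (ν*t)) ∩ Ioi (0:ℝ)) := by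
          apply measure_mono
          intro t ht
          exact ⟨hs ht, ht⟩
        have h2 : volume (Ioi (0:ℝ)) = ⊤ := by simp [Real.volume_Ioi]
        rw [h2] at this
        simp only [top_le_iff] at this
        rw [this]
        exact ENNReal.zero_lt_top
      · filter_upwards [ae_restrict_mem measurableSet_Ioi] with t ht
        have hlt : Real.cosh (ν*t) ≤ Real.sqrt (Real.cosh ((ν-1)*t) * Real.cosh ((ν+1)*t)) := by
          rw [show Real.cosh (ν*t) = Real.sqrt (Real.cosh (ν*t)^2) by
            rw [Real.sqrt_sq (Real.cosh_pos _).le]]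
          apply Real.sqrt_le_sqrt
          rw [cosh_mul_cosh_eq]
          nlinarith [sq_nonneg (Real.sinh t)]
        have h4 := mul_le_mul_of_nonneg_left hlt (Real.exp_pos (-x * Real.cosh t)).le
        show (0:ℝ) ≤ b t - Real.exp (-x * Real.cosh t) * Real.cosh (ν*t)
        simp only [hb]
        linarith
      · exact hbint.sub hKn
    rw [integral_sub hbint hKn] at hdiff
    rw [hB, besselK]
    linarith
  -- step 2 : B^2 ≤ A * C  (Cauchy-Schwarz via squares)
  have step2 : B^2 ≤ besselK (ν-1) x * besselK (ν+1) x := by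
    set A := besselK (ν-1) x
    set C := besselK (ν+1) x
    have hnonneg : 0 ≤ ∫ t in Ioi (0:ℝ),
        (B^2 * (Real.exp (-x * Real.cosh t) * Real.cosh ((ν-1)*t))
          - 2*A*B * b t
          + A^2 * (Real.exp (-x * Real.cosh t) * Real.cosh ((ν+1)*t))) := by
      apply setIntegral_nonneg measurableSet_Ioi
      intro t ht
      have key : B^2 * (Real.exp (-x * Real.cosh t) * Real.cosh ((ν-1)*t))
          - 2*A*B * b t
          + A^2 * (Real.exp (-x * Real.cosh t) * Real.cosh ((ν+1)*t))
          = (B * Real.sqrt (Real.exp (-x * Real.cosh t) * Real.cosh ((ν-1)*t))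
            - A * Real.sqrt (Real.exp (-x * Real.cosh t) * Real.cosh ((ν+1)*t)))^2 := by
        have e1 : Real.sqrt (Real.exp (-x * Real.cosh t) * Real.cosh ((ν-1)*t))^2
            = Real.exp (-x * Real.cosh t) * Real.cosh ((ν-1)*t) :=
          Real.sq_sqrt (by positivity)
        have e2 : Real.sqrt (Real.exp (-x * Real.cosh t) * Real.cosh ((ν+1)*t))^2
            = Real.exp (-x * Real.cosh t) * Real.cosh ((ν+1)*t) :=
          Real.sq_sqrt (by positivity)
        have e3 : Real.sqrt (Real.exp (-x * Real.cosh t) * Real.cosh ((ν-1)*t))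
            * Real.sqrt (Real.exp (-x * Real.cosh t) * Real.cosh ((ν+1)*t)) = b t := by
          rw [← Real.sqrt_mul (by positivity), hb]
          rw [show Real.exp (-x * Real.cosh t) * Real.cosh ((ν-1)*t)
              * (Real.exp (-x * Real.cosh t) * Real.cosh ((ν+1)*t))
              = (Real.exp (-x * Real.cosh t))^2 * (Real.cosh ((ν-1)*t) * Real.cosh ((ν+1)*t)) by
            ring]
          rw [Real.sqrt_mul (sq_nonneg _), Real.sqrt_sq (Real.exp_pos _).le]
        linear_combination (-B^2) * e1 + (-A^2) * e2 + 2*A*B*e3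
      rw [key]
      positivity
    have hsplit : (∫ t in Ioi (0:ℝ),
        (B^2 * (Real.exp (-x * Real.cosh t) * Real.cosh ((ν-1)*t))
          - 2*A*B * b t
          + A^2 * (Real.exp (-x * Real.cosh t) * Real.cosh ((ν+1)*t))))
        = B^2 * A - 2*A*B*B + A^2 * C := by
      have i1 : IntegrableOn (fun t => B^2 * (Real.exp (-x * Real.cosh t) * Real.cosh ((ν-1)*t)))
          (Ioi (0:ℝ)) := hKm.const_mul _
      have i2 : IntegrableOn (fun t => 2*A*B * b t) (Ioi (0:ℝ)) := hbint.const_mul _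
      have i3 : IntegrableOn (fun t => A^2 * (Real.exp (-x * Real.cosh t) * Real.cosh ((ν+1)*t)))
          (Ioi (0:ℝ)) := hKp.const_mul _
      have i12 : IntegrableOn (fun t => B^2 * (Real.exp (-x * Real.cosh t) * Real.cosh ((ν-1)*t))
          - 2*A*B * b t) (Ioi (0:ℝ)) := i1.sub i2
      rw [integral_add i12 i3, integral_sub i1 i2]
      simp only [MeasureTheory.integral_const_mul]
      rw [← hB]
      rfl
    rw [hsplit] at hnonneg
    nlinarith
  nlinarith

lemma sqrt_gt_abs (ν x : ℝ) (hx : 0 < x) : |ν| < Real.sqrt (ν^2 + x^2) := by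
  have h : |ν| = Real.sqrt (ν^2) := by rw [Real.sqrt_sq_eq_abs]
  rw [h]
  apply Real.sqrt_lt_sqrt (sq_nonneg _)
  nlinarith

lemma besselK_ratio_lower (ν x : ℝ) (hx : 0 < x) :
    (ν + Real.sqrt (ν^2+x^2)) * besselK ν x < x * besselK (ν+1) x := by
  have hrec := besselK_recurrence ν x hx
  have hT := besselK_turan ν x hx
  have hP : 0 < besselK ν x := besselK_pos _ x hx
  have hQ : 0 < besselK (ν+1) x := besselK_pos _ x hx
  have hPm : 0 < besselK (ν-1) x := besselK_pos _ x hx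
  set P := besselK ν x
  set Q := besselK (ν+1) x
  set Pm := besselK (ν-1) x
  set s := Real.sqrt (ν^2+x^2) with hs
  have hs2 : s^2 = ν^2 + x^2 := Real.sq_sqrt (by positivity)
  have hsν : |ν| < s := sqrt_gt_abs ν x hx
  have hsν1 : ν < s := lt_of_le_of_lt (le_abs_self ν) hsν
  have hsν2 : -ν < s := lt_of_le_of_lt (neg_le_abs ν) hsν
  have hxQ : x*Q = x*Pm + 2*ν*P := by
    field_simp [hrec]
    rw [hrec]; field_simp
  have hquad : 0 < x*Q^2 - 2*ν*P*Q - x*P^2 := by nlinarith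
  have h2 : 0 < x*Q + (s-ν)*P := by nlinarith
  have h3 : 0 < (x*Q - (ν+s)*P) * (x*Q + (s-ν)*P) := by nlinarith
  by_contra hcon
  push_neg at hcon
  nlinarith

lemma besselK_ratio_upper (ν x : ℝ) (hx : 0 < x) :
    x * besselK (ν+1) x < (ν+1 + Real.sqrt ((ν+1)^2+x^2)) * besselK ν x := by
  have h := besselK_ratio_lower (-ν-1) x hx
  rw [show (-ν-1)+1 = -ν by ring, besselK_neg ν x, show (-ν-1 : ℝ) = -(ν+1) by ring,
    besselK_neg (ν+1) x] at h
  rw [show (-(ν+1))^2 = (ν+1)^2 by ring] at h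
  set s := Real.sqrt ((ν+1)^2+x^2) with hs
  have hs2 : s^2 = (ν+1)^2 + x^2 := Real.sq_sqrt (by positivity)
  have hsν : |ν+1| < s := sqrt_gt_abs (ν+1) x hx
  have hsν2 : -(ν+1) < s := lt_of_le_of_lt (neg_le_abs _) hsν
  have hP : 0 < besselK ν x := besselK_pos _ x hx
  have hQ : 0 < besselK (ν+1) x := besselK_pos _ x hx
  nlinarith [mul_lt_mul_of_pos_left h (show (0:ℝ) < s + (ν+1) by nlinarith)]

lemma sqrt_lip (k α a b : ℝ) (hk : 0 ≤ k) (hα : 0 < α) (ha : 0 ≤ a) (hab : a ≤ b) :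
    Real.sqrt (k + α^2*b^2) ≤ Real.sqrt (k + α^2*a^2) + α*(b-a) := by
  have h1 : α*a ≤ Real.sqrt (k+α^2*a^2) := by
    rw [show α*a = Real.sqrt ((α*a)^2) by rw [Real.sqrt_sq (by positivity)]]
    apply Real.sqrt_le_sqrt; nlinarith
  have h2 : 0 ≤ Real.sqrt (k+α^2*a^2) + α*(b-a) := by
    have := Real.sqrt_nonneg (k+α^2*a^2); nlinarith
  rw [show Real.sqrt (k+α^2*a^2) + α*(b-a)
      = Real.sqrt ((Real.sqrt (k+α^2*a^2) + α*(b-a))^2) by rw [Real.sqrt_sq h2]]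
  apply Real.sqrt_le_sqrt
  have hs : (Real.sqrt (k+α^2*a^2))^2 = k+α^2*a^2 := Real.sq_sqrt (by positivity)
  nlinarith [mul_nonneg (mul_nonneg hα.le (sub_nonneg.2 hab)) (sub_nonneg.2 h1)]

lemma fixed_point (t α β δ γ : ℝ) (hα : 0 < α) (hβ : 0 < β) (hβα : β < α) (hδ : 0 < δ)
    (hγ : 0 < γ) (hγ2 : γ^2 = α^2 - β^2) :
    (β/α^2) * (t + Real.sqrt (t^2 + α^2*(δ^2 + ((β/γ^2) * (t + Real.sqrt (t^2 + δ^2*γ^2)))^2)))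
      = (β/γ^2) * (t + Real.sqrt (t^2 + δ^2*γ^2)) := by
  set w : ℝ := Real.sqrt (t^2 + δ^2*γ^2) with hw
  have hw2 : w^2 = t^2 + δ^2*γ^2 := Real.sq_sqrt (by positivity)
  have hwt : |t| < w := by
    rw [show |t| = Real.sqrt (t^2) by rw [Real.sqrt_sq_eq_abs], hw]
    apply Real.sqrt_lt_sqrt (sq_nonneg _)
    have : 0 < δ^2*γ^2 := by positivity
    linarith
  have hwpos : β^2*t + α^2*w > 0 := by
    have h2 := neg_le_abs t
    have h5 : α^2*|t| - β^2*|t| = γ^2*|t| := by rw [hγ2]; ring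
    nlinarith [mul_lt_mul_of_pos_left hwt (show (0:ℝ) < α^2 by positivity),
      mul_le_mul_of_nonneg_left h2 (sq_nonneg β),
      mul_nonneg (sq_nonneg γ) (abs_nonneg t), h5]
  have hkey : Real.sqrt (t^2 + α^2*(δ^2 + ((β/γ^2) * (t + w))^2))
      = (β^2*t + α^2*w)/γ^2 := by
    rw [show t^2 + α^2*(δ^2 + ((β/γ^2) * (t + w))^2) = ((β^2*t + α^2*w)/γ^2)^2 by
      field_simp
      linear_combination (-(α^2)*(α^2-β^2)) * hw2 + (t^2*(γ^2+α^2-β^2) + δ^2*α^2*γ^2) * hγ2]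
    exact Real.sqrt_sq (by positivity)
  rw [hkey]
  field_simp
  linear_combination t*hγ2

lemma M0_pos (t α β δ γ : ℝ) (hβ : 0 < β) (hδ : 0 < δ) (hγ : 0 < γ) :
    0 < (β/γ^2) * (t + Real.sqrt (t^2 + δ^2*γ^2)) := by
  have hwt : |t| < Real.sqrt (t^2 + δ^2*γ^2) := by
    rw [show |t| = Real.sqrt (t^2) by rw [Real.sqrt_sq_eq_abs]]
    apply Real.sqrt_lt_sqrt (sq_nonneg _)
    have : 0 < δ^2*γ^2 := by positivity
    linarith
  have h2 := neg_le_abs t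
  have : 0 < t + Real.sqrt (t^2 + δ^2*γ^2) := by linarith
  positivity

lemma trap_upper (t α β δ γ M : ℝ) (hα : 0 < α) (hβ : 0 < β) (hβα : β < α) (hδ : 0 < δ)
    (hγ : 0 < γ) (hγ2 : γ^2 = α^2 - β^2) (hMpos : 0 < M)
    (hlt : M < (β/α^2) * (t + Real.sqrt (t^2 + α^2*(δ^2 + M^2)))) :
    M < (β/γ^2) * (t + Real.sqrt (t^2 + δ^2*γ^2)) := by
  set M₀ := (β/γ^2) * (t + Real.sqrt (t^2 + δ^2*γ^2)) with hM₀
  have hfp := fixed_point t α β δ γ hα hβ hβα hδ hγ hγ2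
  have hM₀pos : 0 < M₀ := M0_pos t α β δ γ hβ hδ hγ
  by_contra hcon
  push_neg at hcon   -- M₀ ≤ M
  have hlip : Real.sqrt (t^2 + α^2*(δ^2 + M^2))
      ≤ Real.sqrt (t^2 + α^2*(δ^2 + M₀^2)) + α*(M - M₀) := by
    have := sqrt_lip (t^2 + α^2*δ^2) α M₀ M (by positivity) hα hM₀pos.le hcon
    rw [show t^2 + α^2*(δ^2 + M^2) = t^2 + α^2*δ^2 + α^2*M^2 by ring,
      show t^2 + α^2*(δ^2 + M₀^2) = t^2 + α^2*δ^2 + α^2*M₀^2 by ring]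
    linarith
  have hαβ : (β/α^2) * (α*(M-M₀)) ≤ M - M₀ := by
    rw [div_mul_eq_mul_div, div_le_iff₀ (show (0:ℝ) < α^2 by positivity)]
    nlinarith [mul_le_mul_of_nonneg_right (mul_le_mul_of_nonneg_left hβα.le hα.le)
      (sub_nonneg.2 hcon)]
  have : M < M₀ + (M - M₀) := by
    calc M < (β/α^2) * (t + Real.sqrt (t^2 + α^2*(δ^2 + M^2))) := hlt
      _ ≤ (β/α^2) * (t + Real.sqrt (t^2 + α^2*(δ^2 + M₀^2)) + α*(M-M₀)) := by
          apply mul_le_mul_of_nonneg_left _ (by positivity)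
          linarith
      _ = (β/α^2) * (t + Real.sqrt (t^2 + α^2*(δ^2 + M₀^2))) + (β/α^2) * (α*(M-M₀)) := by ring
      _ = M₀ + (β/α^2) * (α*(M-M₀)) := by rw [hfp]
      _ ≤ M₀ + (M - M₀) := by linarith
  linarith

lemma trap_lower (t α β δ γ M : ℝ) (hα : 0 < α) (hβ : 0 < β) (hβα : β < α) (hδ : 0 < δ)
    (hγ : 0 < γ) (hγ2 : γ^2 = α^2 - β^2) (hMpos : 0 < M)
    (hgt : (β/α^2) * (t + Real.sqrt (t^2 + α^2*(δ^2 + M^2))) < M) :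
    (β/γ^2) * (t + Real.sqrt (t^2 + δ^2*γ^2)) < M := by
  set M₀ := (β/γ^2) * (t + Real.sqrt (t^2 + δ^2*γ^2)) with hM₀
  have hfp := fixed_point t α β δ γ hα hβ hβα hδ hγ hγ2
  have hM₀pos : 0 < M₀ := M0_pos t α β δ γ hβ hδ hγ
  by_contra hcon
  push_neg at hcon   -- M₀ ≥ M
  have hlip : Real.sqrt (t^2 + α^2*(δ^2 + M₀^2))
      ≤ Real.sqrt (t^2 + α^2*(δ^2 + M^2)) + α*(M₀ - M) := by
    have := sqrt_lip (t^2 + α^2*δ^2) α M M₀ (by positivity) hα hMpos.le hcon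
    rw [show t^2 + α^2*(δ^2 + M^2) = t^2 + α^2*δ^2 + α^2*M^2 by ring,
      show t^2 + α^2*(δ^2 + M₀^2) = t^2 + α^2*δ^2 + α^2*M₀^2 by ring]
    linarith
  have hαβ : (β/α^2) * (α*(M₀-M)) ≤ M₀ - M := by
    rw [div_mul_eq_mul_div, div_le_iff₀ (show (0:ℝ) < α^2 by positivity)]
    nlinarith [mul_le_mul_of_nonneg_right (mul_le_mul_of_nonneg_left hβα.le hα.le)
      (sub_nonneg.2 hcon)]
  have : M₀ < M + (M₀ - M) := by
    calc M₀ = (β/α^2) * (t + Real.sqrt (t^2 + α^2*(δ^2 + M₀^2))) := hfp.symm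
      _ ≤ (β/α^2) * (t + Real.sqrt (t^2 + α^2*(δ^2 + M^2)) + α*(M₀-M)) := by
          apply mul_le_mul_of_nonneg_left _ (by positivity)
          linarith
      _ = (β/α^2) * (t + Real.sqrt (t^2 + α^2*(δ^2 + M^2))) + (β/α^2) * (α*(M₀-M)) := by ring
      _ < M + (M₀ - M) := by linarith
  linarith

theorem stmt_9 (lam α β δ γ : ℝ) (hα : 0 < α) (hβ : 0 < β) (hβα : β < α) (hδ : 0 < δ)
    (hγ : γ = Real.sqrt (α ^ 2 - β ^ 2)) (M E : ℝ)
    (hM : M / Real.sqrt (δ ^ 2 + M ^ 2) *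
        (besselK (lam - 3 / 2) (α * Real.sqrt (δ ^ 2 + M ^ 2)) /
          besselK (lam - 1 / 2) (α * Real.sqrt (δ ^ 2 + M ^ 2))) = β / α)
    (hE : E = δ * β * besselK (lam + 1) (δ * γ) / (γ * besselK lam (δ * γ))) :
    β / γ ^ 2 * (1 / 2 + Real.sqrt (lam ^ 2 + δ ^ 2 * γ ^ 2)
        - Real.sqrt ((lam - 1 / 2) ^ 2 + δ ^ 2 * γ ^ 2)) < E - M ∧
    E - M < β / γ ^ 2 * (5 / 2 + Real.sqrt ((lam + 1) ^ 2 + δ ^ 2 * γ ^ 2)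
        - Real.sqrt ((lam - 3 / 2) ^ 2 + δ ^ 2 * γ ^ 2)) := by
  have hαβ2 : 0 < α^2 - β^2 := by nlinarith
  have hγpos : 0 < γ := by rw [hγ]; exact Real.sqrt_pos.2 hαβ2
  have hγ2 : γ^2 = α^2 - β^2 := by rw [hγ]; exact Real.sq_sqrt hαβ2.le
  have hc : 0 < δ * γ := mul_pos hδ hγpos
  -- mean bounds
  have hP : 0 < besselK lam (δ*γ) := besselK_pos _ _ hc
  have hQ : 0 < besselK (lam+1) (δ*γ) := besselK_pos _ _ hc
  have hcsq : (δ*γ)^2 = δ^2*γ^2 := by ring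
  have hElow : (β/γ^2) * (lam + Real.sqrt (lam^2 + δ^2*γ^2)) < E := by
    have hlow := besselK_ratio_lower lam (δ*γ) hc
    rw [hcsq] at hlow
    rw [hE, lt_div_iff₀ (mul_pos hγpos hP)]
    rw [show β/γ^2 * (lam + Real.sqrt (lam^2 + δ^2*γ^2)) * (γ * besselK lam (δ*γ))
        = (β/γ) * ((lam + Real.sqrt (lam^2 + δ^2*γ^2)) * besselK lam (δ*γ)) by
      field_simp]
    rw [show δ * β * besselK (lam+1) (δ*γ) = (β/γ) * ((δ*γ) * besselK (lam+1) (δ*γ)) by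
      field_simp]
    exact mul_lt_mul_of_pos_left hlow (by positivity)
  have hEup : E < (β/γ^2) * ((lam+1) + Real.sqrt ((lam+1)^2 + δ^2*γ^2)) := by
    have hup := besselK_ratio_upper lam (δ*γ) hc
    rw [hcsq] at hup
    rw [hE, div_lt_iff₀ (mul_pos hγpos hP)]
    rw [show β/γ^2 * ((lam+1) + Real.sqrt ((lam+1)^2 + δ^2*γ^2)) * (γ * besselK lam (δ*γ))
        = (β/γ) * (((lam+1) + Real.sqrt ((lam+1)^2 + δ^2*γ^2)) * besselK lam (δ*γ)) by
      field_simp]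
    rw [show δ * β * besselK (lam+1) (δ*γ) = (β/γ) * ((δ*γ) * besselK (lam+1) (δ*γ)) by
      field_simp]
    exact mul_lt_mul_of_pos_left hup (by positivity)
  -- mode bounds
  set s : ℝ := Real.sqrt (δ^2 + M^2) with hsdef
  have hs2 : s^2 = δ^2 + M^2 := Real.sq_sqrt (by positivity)
  have hspos : 0 < s := by
    rw [hsdef]; apply Real.sqrt_pos.2; positivity
  have hx : 0 < α * s := mul_pos hα hspos
  have hKP : 0 < besselK (lam - 3/2) (α*s) := besselK_pos _ _ hx
  have hKQ : 0 < besselK (lam - 1/2) (α*s) := besselK_pos _ _ hx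
  have hM' : M / s * (besselK (lam - 3/2) (α*s) / besselK (lam - 1/2) (α*s)) = β / α := hM
  have hMeq : M * α * besselK (lam - 3/2) (α*s) = β * s * besselK (lam - 1/2) (α*s) := by
    rw [div_mul_div_comm] at hM'
    have := (div_eq_div_iff (by positivity) (by positivity)).mp hM'
    linear_combination this
  have hMpos : 0 < M := by
    nlinarith [mul_pos (mul_pos hβ hspos) hKQ, mul_pos hα hKP, hMeq]
  have hxsq : (α*s)^2 = α^2*(δ^2 + M^2) := by rw [mul_pow, hs2]
  have hKQ1 : besselK ((lam - 3/2) + 1) (α*s) = besselK (lam - 1/2) (α*s) := by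
    rw [show lam - 3/2 + 1 = lam - 1/2 by ring]
  -- upper bound for M
  have hMup : M < (β/α^2) * ((lam - 1/2) + Real.sqrt ((lam - 1/2)^2 + α^2*(δ^2+M^2))) := by
    have hru := besselK_ratio_upper (lam - 3/2) (α*s) hx
    rw [hKQ1, show (lam - 3/2) + 1 = lam - 1/2 by ring, hxsq] at hru
    have h2 := mul_lt_mul_of_pos_left hru (mul_pos hβ hspos)
    have h3 : β*s*(α*s * besselK (lam - 1/2) (α*s))
        = (α^2*s*M) * besselK (lam - 3/2) (α*s) := by
      linear_combination (-(α*s)) * hMeq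
    rw [h3] at h2
    have h4 : (α^2*s*M) * besselK (lam - 3/2) (α*s)
        = (M*α^2*s) * besselK (lam - 3/2) (α*s) := by ring
    rw [h4] at h2
    rw [show (β/α^2) * ((lam - 1/2) + Real.sqrt ((lam - 1/2)^2 + α^2*(δ^2+M^2)))
        = β * ((lam - 1/2) + Real.sqrt ((lam - 1/2)^2 + α^2*(δ^2+M^2))) / α^2 by ring,
      lt_div_iff₀ (show (0:ℝ) < α^2 by positivity)]
    have h5 : (M*α^2) * (s * besselK (lam - 3/2) (α*s))
        < (β * ((lam - 1/2) + Real.sqrt ((lam - 1/2)^2 + α^2*(δ^2+M^2)))) *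
          (s * besselK (lam - 3/2) (α*s)) := by
      calc (M*α^2) * (s * besselK (lam - 3/2) (α*s))
          = (M*α^2*s) * besselK (lam - 3/2) (α*s) := by ring
        _ < β*s*(((lam - 1/2) + Real.sqrt ((lam - 1/2)^2 + α^2*(δ^2+M^2)))
            * besselK (lam - 3/2) (α*s)) := h2
        _ = (β * ((lam - 1/2) + Real.sqrt ((lam - 1/2)^2 + α^2*(δ^2+M^2)))) *
            (s * besselK (lam - 3/2) (α*s)) := by ring
    exact lt_of_mul_lt_mul_right h5 (by positivity)
  -- lower bound for M
  have hMlo : (β/α^2) * ((lam - 3/2) + Real.sqrt ((lam - 3/2)^2 + α^2*(δ^2+M^2))) < M := by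
    have hrl := besselK_ratio_lower (lam - 3/2) (α*s) hx
    rw [hKQ1, hxsq] at hrl
    have h2 := mul_lt_mul_of_pos_left hrl (mul_pos hβ hspos)
    have h3 : β*s*(α*s * besselK (lam - 1/2) (α*s))
        = (M*α^2*s) * besselK (lam - 3/2) (α*s) := by
      linear_combination (-(α*s)) * hMeq
    rw [h3] at h2
    rw [show (β/α^2) * ((lam - 3/2) + Real.sqrt ((lam - 3/2)^2 + α^2*(δ^2+M^2)))
        = β * ((lam - 3/2) + Real.sqrt ((lam - 3/2)^2 + α^2*(δ^2+M^2))) / α^2 by ring,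
      div_lt_iff₀ (show (0:ℝ) < α^2 by positivity)]
    have h5 : (β * ((lam - 3/2) + Real.sqrt ((lam - 3/2)^2 + α^2*(δ^2+M^2)))) *
          (s * besselK (lam - 3/2) (α*s))
        < (M*α^2) * (s * besselK (lam - 3/2) (α*s)) := by
      calc (β * ((lam - 3/2) + Real.sqrt ((lam - 3/2)^2 + α^2*(δ^2+M^2)))) *
            (s * besselK (lam - 3/2) (α*s))
          = β*s*(((lam - 3/2) + Real.sqrt ((lam - 3/2)^2 + α^2*(δ^2+M^2)))
            * besselK (lam - 3/2) (α*s)) := by ring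
        _ < (M*α^2*s) * besselK (lam - 3/2) (α*s) := h2
        _ = (M*α^2) * (s * besselK (lam - 3/2) (α*s)) := by ring
    exact lt_of_mul_lt_mul_right h5 (by positivity)
  -- trap
  have hMup2 : M < (β/γ^2) * ((lam - 1/2) + Real.sqrt ((lam - 1/2)^2 + δ^2*γ^2)) :=
    trap_upper (lam - 1/2) α β δ γ M hα hβ hβα hδ hγpos hγ2 hMpos hMup
  have hMlo2 : (β/γ^2) * ((lam - 3/2) + Real.sqrt ((lam - 3/2)^2 + δ^2*γ^2)) < M :=
    trap_lower (lam - 3/2) α β δ γ M hα hβ hβα hδ hγpos hγ2 hMpos hMlo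
  constructor
  · have : β / γ ^ 2 * (1 / 2 + Real.sqrt (lam ^ 2 + δ ^ 2 * γ ^ 2)
        - Real.sqrt ((lam - 1 / 2) ^ 2 + δ ^ 2 * γ ^ 2))
        = (β/γ^2) * (lam + Real.sqrt (lam^2 + δ^2*γ^2))
          - (β/γ^2) * ((lam - 1/2) + Real.sqrt ((lam - 1/2)^2 + δ^2*γ^2)) := by ring
    rw [this]
    linarith
  · have : β / γ ^ 2 * (5 / 2 + Real.sqrt ((lam + 1) ^ 2 + δ ^ 2 * γ ^ 2)
        - Real.sqrt ((lam - 3 / 2) ^ 2 + δ ^ 2 * γ ^ 2))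
        = (β/γ^2) * ((lam+1) + Real.sqrt ((lam+1)^2 + δ^2*γ^2))
          - (β/γ^2) * ((lam - 3/2) + Real.sqrt ((lam - 3/2)^2 + δ^2*γ^2)) := by ring
    rw [this]
    linarith
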